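/- arXiv:2201.04603 — 2 statements merged into one kernel-verified Lean document; each statement's English description precedes it below -/
import Mathlib

section
/- Let k ≥ 1 and let u, v be finite words of equal length over an alphabet A with u ∼_k v and u ≁_{k+1} v. Then for every finite word w over A: (a) w·u·u ∼_k w·v·v but w·u·u ≁_{k+1} w·v·v; and (b) w·u·v ∼_{k+1} w·v·u but w·u·v ≁_{k+2} w·v·u. -/
/-- The number of occurrences of `w` as a (scattered) subword of `u`:
the binomial coefficient of the words `u` and `w`. -/
def wordBinom {A : Type*} [DecidableEq A] (u w : List A) : ℕ := u.sublists.count w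

/-- `k`-binomial equivalence of finite words: all binomial coefficients with respect to
words of length at most `k` agree. -/
def BinEquiv {A : Type*} [DecidableEq A] (k : ℕ) (u v : List A) : Prop :=
  ∀ x : List A, x.length ≤ k → wordBinom u x = wordBinom v x

/-- `k`-binomial equivalence as a setoid. -/
def binSetoid (A : Type*) [DecidableEq A] (k : ℕ) : Setoid (List A) where
  r := BinEquiv k
  iseqv := ⟨fun _ _ _ => rfl, fun h x hx => (h x hx).symm,
    fun h h' x hx => (h x hx).trans (h' x hx)⟩

/-- `u` occurs in the infinite word `x` at position `i`. -/
def OccursAt {A : Type*} (u : List A) (x : ℕ → A) (i : ℕ) : Prop :=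
  u = (List.range u.length).map (fun j => x (i + j))

/-- `u` is a factor of the infinite word `x`. -/
def FactorOf {A : Type*} (u : List A) (x : ℕ → A) : Prop := ∃ i, OccursAt u x i

/-- The set of length-`n` factors of `x`. -/
def Fac {A : Type*} (x : ℕ → A) (n : ℕ) : Set (List A) :=
  {u | u.length = n ∧ FactorOf u x}

/-- Factor complexity of an infinite word. -/
noncomputable def fc {A : Type*} (x : ℕ → A) (n : ℕ) : ℕ := (Fac x n).ncard

/-- `k`-binomial complexity of an infinite word: the number of `k`-binomial equivalence
classes of length-`n` factors. -/
noncomputable def bc {A : Type*} [DecidableEq A] (x : ℕ → A) (k n : ℕ) : ℕ :=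
  (Quotient.mk (binSetoid A k) '' Fac x n).ncard

section AuxBinom
open List Finset
variable {A : Type*} [DecidableEq A]
lemma count_beq_bridge (w : List A) (L : List (List A)) :
    @List.count _ List.instBEq w L = @List.count _ instBEqOfDecidableEq w L := by
  induction L with
  | nil => rfl
  | cons x L ih => simp [List.count_cons, ih, beq_iff_eq]

lemma wordBinom_eq' (u w : List A) : wordBinom u w = u.sublists'.count w := by
  show @List.count _ List.instBEq w u.sublists = @List.count _ List.instBEq w u.sublists'
  rw [count_beq_bridge w u.sublists, count_beq_bridge w u.sublists']
  exact @List.Perm.count_eq _ instBEqOfDecidableEq _ _ (List.sublists_perm_sublists' u) w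

lemma wb_nil_left (w : List A) : wordBinom ([] : List A) w = if w = [] then 1 else 0 := by
  show @List.count _ List.instBEq w _ = _
  rw [count_beq_bridge]
  simp [sublists_nil, List.count_singleton']

lemma count_map_cons (a : A) (b : A) (w : List A) (L : List (List A)) :
    @List.count _ List.instBEq (b :: w) (L.map (a :: ·)) =
      if b = a then @List.count _ List.instBEq w L else 0 := by
  split
  · subst b
    rw [count_beq_bridge, count_beq_bridge]
    exact @List.count_map_of_injective _ _ instBEqOfDecidableEq _ instBEqOfDecidableEq _ _ _ (fun x y h => by simpa using h) _
  · refine List.count_eq_zero.mpr ?_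
    simp only [List.mem_map]
    rintro ⟨x, -, h⟩
    cases h; simp_all

lemma count_map_cons_nil (a : A) (L : List (List A)) :
    @List.count _ List.instBEq ([] : List A) (L.map (a :: ·)) = 0 := by
  refine List.count_eq_zero.mpr ?_; simp

lemma wordBinom_cons_nil (a : A) (u : List A) :
    wordBinom (a :: u) [] = wordBinom u [] := by
  rw [wordBinom_eq', wordBinom_eq', sublists'_cons]
  show @List.count _ List.instBEq _ _ = _
  rw [List.count_append, count_map_cons_nil, Nat.add_zero]

lemma wordBinom_nil (u : List A) : wordBinom u [] = 1 := by
  induction u with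
  | nil => simp [wb_nil_left]
  | cons a u ih => rw [wordBinom_cons_nil, ih]

lemma wordBinom_cons (a : A) (u : List A) (b : A) (w : List A) :
    wordBinom (a :: u) (b :: w) =
      wordBinom u (b :: w) + if b = a then wordBinom u w else 0 := by
  rw [wordBinom_eq', wordBinom_eq', wordBinom_eq', sublists'_cons]
  show @List.count _ List.instBEq _ _ = _
  rw [List.count_append, count_map_cons]

lemma wordBinom_append (u v w : List A) :
    wordBinom (u ++ v) w =
      ∑ d ∈ Finset.range (w.length + 1), wordBinom u (w.take d) * wordBinom v (w.drop d) := by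
  induction u generalizing w with
  | nil =>
    have hz : ∑ i ∈ Finset.range w.length,
        wordBinom ([] : List A) (w.take (i+1)) * wordBinom v (w.drop (i+1)) = 0 := by
      refine Finset.sum_eq_zero fun i hi => ?_
      rw [Finset.mem_range] at hi
      have hne : w.take (i+1) ≠ [] := by
        rw [Ne, List.take_eq_nil_iff]
        push_neg
        exact ⟨Nat.succ_ne_zero i, List.ne_nil_of_length_pos (by omega)⟩
      rw [wb_nil_left, if_neg hne, Nat.zero_mul]
    rw [List.nil_append, Finset.sum_range_succ', hz, Nat.zero_add]
    simp [wb_nil_left]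
  | cons a u ih =>
    cases w with
    | nil =>
      simp [wordBinom_nil]
    | cons b w =>
      have key : ∀ e, wordBinom (a::u) ((b::w).take (e+1)) * wordBinom v ((b::w).drop (e+1))
          = wordBinom u ((b::w).take (e+1)) * wordBinom v ((b::w).drop (e+1))
            + (if b = a then wordBinom u (w.take e) * wordBinom v (w.drop e) else 0) := by
        intro e
        simp only [List.take_succ_cons, List.drop_succ_cons, wordBinom_cons]
        rw [Nat.add_mul]
        split <;> simp
      have hsplit :
          ∑ d ∈ Finset.range ((b::w).length + 1),
              wordBinom (a::u) ((b::w).take d) * wordBinom v ((b::w).drop d)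
          = ∑ d ∈ Finset.range ((b::w).length + 1),
              wordBinom u ((b::w).take d) * wordBinom v ((b::w).drop d)
            + if b = a then ∑ e ∈ Finset.range (w.length + 1),
                wordBinom u (w.take e) * wordBinom v (w.drop e) else 0 := by
        rw [Finset.sum_range_succ' (fun d =>
              wordBinom (a::u) ((b::w).take d) * wordBinom v ((b::w).drop d)),
            Finset.sum_range_succ' (fun d =>
              wordBinom u ((b::w).take d) * wordBinom v ((b::w).drop d))]
        simp only [List.length_cons]
        rw [Finset.sum_congr rfl (fun e _ => key e), Finset.sum_add_distrib]
        have h0 : wordBinom (a::u) ((b::w).take 0) * wordBinom v ((b::w).drop 0)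
            = wordBinom u ((b::w).take 0) * wordBinom v ((b::w).drop 0) := by
          simp only [List.take_zero]
          rw [wordBinom_cons_nil]
        rw [h0]
        have hite : ∑ e ∈ Finset.range (w.length + 1),
            (if b = a then wordBinom u (w.take e) * wordBinom v (w.drop e) else 0)
            = if b = a then ∑ e ∈ Finset.range (w.length + 1),
                wordBinom u (w.take e) * wordBinom v (w.drop e) else 0 := by
          split <;> simp
        rw [hite]
        ring
      rw [hsplit, ← ih (b::w), ← ih w, List.cons_append, wordBinom_cons]

lemma conv3 (w p q y : List A) :
    wordBinom (w ++ p ++ q) y =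
      ∑ d ∈ Finset.range (y.length + 1), ∑ e ∈ Finset.range (d + 1),
        wordBinom w (y.take e) * (wordBinom p ((y.take d).drop e) * wordBinom q (y.drop d)) := by
  rw [wordBinom_append (w ++ p) q y]
  refine Finset.sum_congr rfl fun d hd => ?_
  rw [Finset.mem_range] at hd
  rw [wordBinom_append w p (y.take d)]
  have hlen : (y.take d).length = d := by rw [List.length_take]; omega
  rw [hlen, Finset.sum_mul]
  refine Finset.sum_congr rfl fun e he => ?_
  rw [Finset.mem_range] at he
  have ht : (y.take d).take e = y.take e := by rw [List.take_take]; congr 1; omega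
  rw [ht, Nat.mul_assoc]

lemma diff3 (w p q r s y : List A) :
    (wordBinom (w ++ p ++ q) y : ℤ) - (wordBinom (w ++ r ++ s) y : ℤ) =
      ∑ d ∈ Finset.range (y.length + 1), ∑ e ∈ Finset.range (d + 1),
        (wordBinom w (y.take e) : ℤ) *
          ((wordBinom p ((y.take d).drop e) : ℤ) * (wordBinom q (y.drop d) : ℤ) -
           (wordBinom r ((y.take d).drop e) : ℤ) * (wordBinom s (y.drop d) : ℤ)) := by
  rw [conv3 w p q y, conv3 w r s y]
  push_cast
  rw [← Finset.sum_sub_distrib]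
  refine Finset.sum_congr rfl fun d _ => ?_
  rw [← Finset.sum_sub_distrib]
  refine Finset.sum_congr rfl fun e _ => ?_
  ring

lemma sum_range_support₁ (N a : ℕ) (f : ℕ → ℤ) (ha : a < N)
    (h : ∀ i < N, i ≠ a → f i = 0) : ∑ i ∈ Finset.range N, f i = f a := by
  rw [← Finset.sum_subset (Finset.singleton_subset_iff.mpr (Finset.mem_range.mpr ha))
    (fun x hx hx' => h x (Finset.mem_range.mp hx) (by simpa using hx'))]
  exact Finset.sum_singleton f a

lemma sum_range_support₂ (N a b : ℕ) (f : ℕ → ℤ) (ha : a < N) (hb : b < N) (hab : a ≠ b)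
    (h : ∀ i < N, i ≠ a → i ≠ b → f i = 0) : ∑ i ∈ Finset.range N, f i = f a + f b := by
  have hsub : ({a, b} : Finset ℕ) ⊆ Finset.range N := by
    intro x hx
    rcases Finset.mem_insert.mp hx with h' | h'
    · exact Finset.mem_range.mpr (h' ▸ ha)
    · exact Finset.mem_range.mpr ((Finset.mem_singleton.mp h') ▸ hb)
  rw [← Finset.sum_subset hsub (fun x hx hx' => by
    simp only [Finset.mem_insert, Finset.mem_singleton, not_or] at hx'
    exact h x (Finset.mem_range.mp hx) hx'.1 hx'.2)]
  exact Finset.sum_pair hab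

lemma sum_range_support₄ (N a b c d : ℕ) (f : ℕ → ℤ) (ha : a < N) (hb : b < N) (hc : c < N)
    (hd : d < N) (hab : a ≠ b) (hac : a ≠ c) (had : a ≠ d) (hbc : b ≠ c) (hbd : b ≠ d)
    (hcd : c ≠ d)
    (h : ∀ i < N, i ≠ a → i ≠ b → i ≠ c → i ≠ d → f i = 0) :
    ∑ i ∈ Finset.range N, f i = f a + f b + f c + f d := by
  have hsub : ({a, b, c, d} : Finset ℕ) ⊆ Finset.range N := by
    intro x hx
    simp only [Finset.mem_insert, Finset.mem_singleton] at hx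
    rcases hx with h' | h' | h' | h' <;> subst h' <;> exact Finset.mem_range.mpr (by assumption)
  rw [← Finset.sum_subset hsub (fun x hx hx' => by
    simp only [Finset.mem_insert, Finset.mem_singleton, not_or] at hx'
    exact h x (Finset.mem_range.mp hx) hx'.1 hx'.2.1 hx'.2.2.1 hx'.2.2.2)]
  rw [Finset.sum_insert (by simp [hab, hac, had]), Finset.sum_insert (by simp [hbc, hbd]),
    Finset.sum_pair hcd]
  ring

lemma sublists'_countP_length (l : List A) (m : ℕ) :
    l.sublists'.countP (fun t => decide (t.length = m)) = l.length.choose m := by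
  induction l generalizing m with
  | nil =>
    cases m <;> simp [List.sublists'_nil, List.countP_cons]
  | cons a l ih =>
    rw [List.sublists'_cons, List.countP_append, List.countP_map]
    cases m with
    | zero =>
      have h0 : List.countP ((fun (t : List A) => decide (t.length = 0)) ∘ (List.cons a)) l.sublists' = 0 := by
        refine List.countP_eq_zero.mpr ?_
        intro t _
        simp
      rw [h0, ih 0]
      simp
    | succ m =>
      have h1 : List.countP ((fun (t : List A) => decide (t.length = m + 1)) ∘ (List.cons a)) l.sublists'
          = List.countP (fun (t : List A) => decide (t.length = m)) l.sublists' := by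
        refine List.countP_congr ?_
        intro t _
        simp
      rw [h1, ih (m+1), ih m]
      simp [Nat.choose_succ_succ, Nat.add_comm]

lemma sublists_countP_length (l : List A) (m : ℕ) :
    l.sublists.countP (fun t => decide (t.length = m)) = l.length.choose m := by
  rw [(List.sublists_perm_sublists' l).countP_eq, sublists'_countP_length]

lemma chain_abstract (c : A → ℤ) (δ : List A → ℤ) (k : ℕ)
    (hstar : ∀ (a b : A) (z : List A), z.length = k → c a * δ (b :: z) = c b * δ (z ++ [a])) :
    ∀ (s r t : List A), s.length + r.length = k + 1 → t.length = s.length →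
      (t.map c).prod * δ (s ++ r) = (s.map c).prod * δ (r ++ t) := by
  intro s
  induction s with
  | nil =>
    intro r t h ht
    have : t = [] := List.length_eq_zero_iff.mp ht
    subst this
    simp
  | cons b s' ih =>
    intro r t h ht
    cases t with
    | nil => simp at ht
    | cons a t' =>
      have hz : (s' ++ r).length = k := by
        simp only [List.length_cons, List.length_append] at h ⊢
        omega
      have e1 := hstar a b (s' ++ r) hz
      have e2 := ih (r ++ [a]) t' (by
          simp only [List.length_cons, List.length_append, List.length_nil] at h ⊢
          omega)
        (by simpa using ht)
      rw [← List.append_assoc] at e2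
      have hgr : r ++ a :: t' = (r ++ [a]) ++ t' := by simp
      have hgl : (b :: s') ++ r = b :: (s' ++ r) := by simp
      rw [hgr, hgl]
      simp only [List.map_cons, List.prod_cons]
      linear_combination (t'.map c).prod * e1 + c b * e2

section main
variable (k : ℕ) (hk : 1 ≤ k) (u v w : List A) (h1 : BinEquiv k u v)

include h1 in
lemma lemA_pos (y : List A) (hy : y.length ≤ k) :
    (wordBinom (w ++ u ++ u) y : ℤ) - wordBinom (w ++ v ++ v) y = 0 := by
  rw [diff3]
  refine Finset.sum_eq_zero fun d hd => Finset.sum_eq_zero fun e he => ?_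
  rw [Finset.mem_range] at hd he
  have hm : ((y.take d).drop e).length ≤ k := by
    rw [List.length_drop, List.length_take]; omega
  have hl : (y.drop d).length ≤ k := by rw [List.length_drop]; omega
  rw [h1 _ hm, h1 _ hl]
  ring

include h1 in
lemma lemA_neg (y : List A) (hy : y.length = k + 1) :
    (wordBinom (w ++ u ++ u) y : ℤ) - wordBinom (w ++ v ++ v) y =
      2 * ((wordBinom u y : ℤ) - wordBinom v y) := by
  rw [diff3, hy]
  refine (sum_range_support₂ (k + 1 + 1) 0 (k + 1) _ (by omega) (by omega) (by omega)
    ?_).trans ?_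
  · intro d hd hd0 hdk
    refine Finset.sum_eq_zero fun e he => ?_
    rw [Finset.mem_range] at he
    have hm : ((y.take d).drop e).length ≤ k := by
      rw [List.length_drop, List.length_take]; omega
    have hl : (y.drop d).length ≤ k := by rw [List.length_drop]; omega
    rw [h1 _ hm, h1 _ hl]
    ring
  · have h2 : ∑ e ∈ Finset.range (k + 1 + 1),
        (wordBinom w (y.take e) : ℤ) *
          ((wordBinom u ((y.take (k+1)).drop e) : ℤ) * (wordBinom u (y.drop (k+1)) : ℤ) -
           (wordBinom v ((y.take (k+1)).drop e) : ℤ) * (wordBinom v (y.drop (k+1)) : ℤ))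
        = (wordBinom u y : ℤ) - wordBinom v y := by
      refine (sum_range_support₁ (k + 1 + 1) 0 _ (by omega) ?_).trans ?_
      · intro e he he0
        have hm : ((y.take (k+1)).drop e).length ≤ k := by
          rw [List.length_drop, List.length_take]; omega
        have hl : y.drop (k+1) = [] := List.drop_eq_nil_of_le (by omega)
        rw [h1 _ hm, hl]
        simp [wordBinom_nil]
      · have ht : y.take (k+1) = y := List.take_of_length_le (by omega)
        have hl : y.drop (k+1) = [] := List.drop_eq_nil_of_le (by omega)
        simp [ht, hl, wordBinom_nil]
    rw [Finset.sum_range_one, h2]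
    simp [wordBinom_nil]
    try ring

include h1 in
lemma lemB_pos (y : List A) (hy : y.length ≤ k + 1) :
    (wordBinom (w ++ u ++ v) y : ℤ) - wordBinom (w ++ v ++ u) y = 0 := by
  rw [diff3]
  rcases Nat.eq_zero_or_pos y.length with h0 | hpos
  · rw [List.length_eq_zero_iff.mp h0]
    simp [wordBinom_nil]
  refine (sum_range_support₂ (y.length + 1) 0 (y.length) _ (by omega) (by omega) (by omega)
    ?_).trans ?_
  · intro d hd hd0 hdn
    refine Finset.sum_eq_zero fun e he => ?_
    rw [Finset.mem_range] at he
    have hm : ((y.take d).drop e).length ≤ k := by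
      rw [List.length_drop, List.length_take]; omega
    have hl : (y.drop d).length ≤ k := by rw [List.length_drop]; omega
    rw [h1 _ hm, h1 _ hl]
    ring
  · have h2 : ∑ e ∈ Finset.range (y.length + 1),
        (wordBinom w (y.take e) : ℤ) *
          ((wordBinom u ((y.take y.length).drop e) : ℤ) * (wordBinom v (y.drop y.length) : ℤ) -
           (wordBinom v ((y.take y.length).drop e) : ℤ) * (wordBinom u (y.drop y.length) : ℤ))
        = (wordBinom u y : ℤ) - wordBinom v y := by
      refine (sum_range_support₁ (y.length + 1) 0 _ (by omega) ?_).trans ?_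
      · intro e he he0
        have hm : ((y.take y.length).drop e).length ≤ k := by
          rw [List.length_drop, List.length_take]; omega
        have hl : y.drop y.length = [] := List.drop_eq_nil_of_le (by omega)
        rw [h1 _ hm, hl]
        simp [wordBinom_nil]
      · have ht : y.take y.length = y := List.take_of_length_le (by omega)
        have hl : y.drop y.length = [] := List.drop_eq_nil_of_le (by omega)
        simp [ht, hl, wordBinom_nil]
    rw [Finset.sum_range_one, h2]
    simp [wordBinom_nil]
    try ring

include hk h1 in
lemma lemB_neg (a b : A) (z : List A) (hz : z.length = k) :
    (wordBinom (w ++ u ++ v) (b :: (z ++ [a])) : ℤ) -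
      wordBinom (w ++ v ++ u) (b :: (z ++ [a])) =
    (wordBinom u [a] : ℤ) * ((wordBinom u (b :: z) : ℤ) - wordBinom v (b :: z)) -
      (wordBinom u [b] : ℤ) * ((wordBinom u (z ++ [a]) : ℤ) - wordBinom v (z ++ [a])) := by
  set y : List A := b :: (z ++ [a]) with hydef
  have hy : y.length = k + 2 := by simp [hydef, hz]
  have hT0 : y.take 0 = [] := rfl
  have hD0 : y.drop 0 = y := rfl
  have hT1 : y.take 1 = [b] := by simp [hydef]
  have hD1 : y.drop 1 = z ++ [a] := by simp [hydef]
  have hTk1 : y.take (k + 1) = b :: z := by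
    rw [hydef]
    rw [show k + 1 = z.length + 1 by rw [hz]]
    rw [List.take_succ_cons, List.take_left]
  have hDk1 : y.drop (k + 1) = [a] := by
    rw [hydef]
    rw [show k + 1 = z.length + 1 by rw [hz]]
    rw [List.drop_succ_cons, List.drop_left]
  have hTk2 : y.take (k + 2) = y := List.take_of_length_le (by omega)
  have hDk2 : y.drop (k + 2) = [] := List.drop_eq_nil_of_le (by omega)
  rw [diff3, hy]
  refine (sum_range_support₄ (k + 2 + 1) 0 1 (k + 1) (k + 2) _ (by omega) (by omega)
    (by omega) (by omega) (by omega) (by omega) (by omega) (by omega) (by omega) (by omega)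
    ?_).trans ?_
  · intro d hd hd0 hd1 hdk1 hdk2
    refine Finset.sum_eq_zero fun e he => ?_
    rw [Finset.mem_range] at he
    have hm : ((y.take d).drop e).length ≤ k := by
      rw [List.length_drop, List.length_take]; omega
    have hl : (y.drop d).length ≤ k := by rw [List.length_drop]; omega
    rw [h1 _ hm, h1 _ hl]
    ring
  · -- compute the four inner sums
    have f0 : ∑ e ∈ Finset.range (0 + 1),
        (wordBinom w (y.take e) : ℤ) *
          ((wordBinom u ((y.take 0).drop e) : ℤ) * (wordBinom v (y.drop 0) : ℤ) -
           (wordBinom v ((y.take 0).drop e) : ℤ) * (wordBinom u (y.drop 0) : ℤ))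
        = (wordBinom v y : ℤ) - wordBinom u y := by
      rw [Finset.sum_range_one, hT0, hD0]
      simp [wordBinom_nil]
      try ring
    have f1 : ∑ e ∈ Finset.range (1 + 1),
        (wordBinom w (y.take e) : ℤ) *
          ((wordBinom u ((y.take 1).drop e) : ℤ) * (wordBinom v (y.drop 1) : ℤ) -
           (wordBinom v ((y.take 1).drop e) : ℤ) * (wordBinom u (y.drop 1) : ℤ))
        = ((wordBinom u [b] : ℤ) * wordBinom v (z ++ [a]) -
            (wordBinom v [b] : ℤ) * wordBinom u (z ++ [a])) +
          (wordBinom w [b] : ℤ) *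
            ((wordBinom v (z ++ [a]) : ℤ) - wordBinom u (z ++ [a])) := by
      rw [Finset.sum_range_succ, Finset.sum_range_one, hT0, hT1, hD1]
      simp only [List.drop_zero, List.drop_succ_cons, List.drop_nil, wordBinom_nil]
      push_cast
      ring
    have fk1 : ∑ e ∈ Finset.range (k + 1 + 1),
        (wordBinom w (y.take e) : ℤ) *
          ((wordBinom u ((y.take (k+1)).drop e) : ℤ) * (wordBinom v (y.drop (k+1)) : ℤ) -
           (wordBinom v ((y.take (k+1)).drop e) : ℤ) * (wordBinom u (y.drop (k+1)) : ℤ))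
        = (wordBinom u (b :: z) : ℤ) * (wordBinom v [a] : ℤ) -
          (wordBinom v (b :: z) : ℤ) * (wordBinom u [a] : ℤ) := by
      refine (sum_range_support₁ (k + 1 + 1) 0 _ (by omega) ?_).trans ?_
      · intro e he he0
        have hm : ((y.take (k+1)).drop e).length ≤ k := by
          rw [List.length_drop, List.length_take]; omega
        have hl : (y.drop (k+1)).length ≤ k := by rw [List.length_drop]; omega
        rw [h1 _ hm, h1 _ hl]
        ring
      · rw [hTk1, hDk1]
        simp [wordBinom_nil]
    have fk2 : ∑ e ∈ Finset.range (k + 2 + 1),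
        (wordBinom w (y.take e) : ℤ) *
          ((wordBinom u ((y.take (k+2)).drop e) : ℤ) * (wordBinom v (y.drop (k+2)) : ℤ) -
           (wordBinom v ((y.take (k+2)).drop e) : ℤ) * (wordBinom u (y.drop (k+2)) : ℤ))
        = ((wordBinom u y : ℤ) - wordBinom v y) +
          (wordBinom w [b] : ℤ) *
            ((wordBinom u (z ++ [a]) : ℤ) - wordBinom v (z ++ [a])) := by
      refine (sum_range_support₂ (k + 2 + 1) 0 1 _ (by omega) (by omega) (by omega)
        ?_).trans ?_
      · intro e he he0 he1
        have hm : ((y.take (k+2)).drop e).length ≤ k := by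
          rw [List.length_drop, List.length_take]; omega
        rw [hDk2, h1 _ hm]
        simp [wordBinom_nil]
      · rw [hTk2, hDk2, hT0, hT1, hD1]
        simp [wordBinom_nil]
        try ring
    rw [f0, f1, fk1, fk2]
    have ca : wordBinom u [a] = wordBinom v [a] := h1 [a] (by simp; omega)
    have cb : wordBinom u [b] = wordBinom v [b] := h1 [b] (by simp; omega)
    rw [← ca, ← cb]
    ring
end main

lemma wordBinom_pos_iff (u t : List A) : 0 < wordBinom u t ↔ t.Sublist u := by
  show 0 < @List.count _ List.instBEq t u.sublists ↔ _
  rw [Nat.pos_iff_ne_zero, Ne, List.count_eq_zero, not_not, List.mem_sublists]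

lemma wordBinom_count_coe (u t : List A) :
    Multiset.count t (↑u.sublists : Multiset (List A)) = wordBinom u t := by
  show _ = @List.count _ List.instBEq t u.sublists
  rw [count_beq_bridge, Multiset.coe_count]

section endgame
variable (k : ℕ) (hk : 1 ≤ k) (u v w : List A) (hlen : u.length = v.length)
  (h1 : BinEquiv k u v)

include hk hlen h1 in
lemma no_k2_equiv (x : List A) (hxlen : x.length = k + 1)
    (hxne : wordBinom u x ≠ wordBinom v x)
    (H : BinEquiv (k + 2) (w ++ u ++ v) (w ++ v ++ u)) : False := by
  classical
  set c : A → ℤ := fun a => (wordBinom u [a] : ℤ) with hc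
  set δ : List A → ℤ := fun t => (wordBinom u t : ℤ) - wordBinom v t with hδ
  -- star property
  have hstar : ∀ (a b : A) (z : List A), z.length = k →
      c a * δ (b :: z) = c b * δ (z ++ [a]) := by
    intro a b z hz
    have hd := lemB_neg k hk u v w h1 a b z hz
    have h0 : wordBinom (w ++ u ++ v) (b :: (z ++ [a])) =
        wordBinom (w ++ v ++ u) (b :: (z ++ [a])) := by
      refine H _ ?_
      simp [hz]
    rw [h0, sub_self] at hd
    simp only [hδ, hc]
    linarith
  -- chain consequence
  have hchain : ∀ t : List A, t.length = k + 1 →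
      (t.map c).prod * δ x = (x.map c).prod * δ t := by
    intro t ht
    have := chain_abstract c δ k hstar x [] t (by simp [hxlen]) (by rw [ht, hxlen])
    simpa using this
  -- the finset of relevant words
  set Mu : Multiset (List A) :=
    Multiset.filter (fun t => t.length = k + 1) (↑u.sublists) with hMu
  set Mv : Multiset (List A) :=
    Multiset.filter (fun t => t.length = k + 1) (↑v.sublists) with hMv
  set F : Finset (List A) := Mu.toFinset ∪ Mv.toFinset with hF
  have hFlen : ∀ t ∈ F, t.length = k + 1 := by
    intro t ht
    rcases Finset.mem_union.mp ht with h' | h' <;>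
      exact (Multiset.mem_filter.mp (Multiset.mem_toFinset.mp h')).2
  have hFsub : ∀ t ∈ F, t.Sublist u ∨ t.Sublist v := by
    intro t ht
    rcases Finset.mem_union.mp ht with h' | h'
    · exact Or.inl (List.mem_sublists.mp (Multiset.mem_coe.mp
        (Multiset.mem_filter.mp (Multiset.mem_toFinset.mp h')).1))
    · exact Or.inr (List.mem_sublists.mp (Multiset.mem_coe.mp
        (Multiset.mem_filter.mp (Multiset.mem_toFinset.mp h')).1))
  -- sums of counts
  have sumGen : ∀ (z : List A), (Multiset.filter (fun t => t.length = k + 1)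
        (↑z.sublists : Multiset (List A))).toFinset ⊆ F →
      ∑ t ∈ F, wordBinom z t = z.length.choose (k + 1) := by
    intro z hsub
    set M : Multiset (List A) :=
      Multiset.filter (fun t => t.length = k + 1) (↑z.sublists) with hM
    have step1 : ∑ t ∈ F, M.count t = Multiset.card M := by
      rw [← Finset.sum_subset hsub (fun t _ ht' =>
        Multiset.count_eq_zero_of_notMem (fun hm => ht' (Multiset.mem_toFinset.mpr hm)))]
      exact Multiset.toFinset_sum_count_eq M
    have step2 : ∀ t ∈ F, M.count t = wordBinom z t := by
      intro t ht
      rw [hM, Multiset.count_filter, if_pos (hFlen t ht), wordBinom_count_coe]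
    have step3 : Multiset.card M = z.length.choose (k + 1) := by
      rw [hM]
      rw [show Multiset.filter (fun t => t.length = k + 1) (↑z.sublists : Multiset (List A))
        = ↑(z.sublists.filter (fun t => decide (t.length = k + 1))) from rfl]
      rw [Multiset.coe_card, ← List.countP_eq_length_filter]
      rw [← sublists_countP_length z (k + 1)]
    rw [← step3, ← step1]
    exact Finset.sum_congr rfl (fun t ht => (step2 t ht).symm)
  have hsumU : ∑ t ∈ F, wordBinom u t = u.length.choose (k + 1) :=
    sumGen u (Finset.subset_union_left)
  have hsumV : ∑ t ∈ F, wordBinom v t = v.length.choose (k + 1) :=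
    sumGen v (Finset.subset_union_right)
  have hsum0 : ∑ t ∈ F, δ t = 0 := by
    simp only [hδ]
    rw [Finset.sum_sub_distrib]
    have hU' : (∑ t ∈ F, (wordBinom u t : ℤ)) = ((u.length.choose (k + 1) : ℕ) : ℤ) := by
      exact_mod_cast hsumU
    have hV' : (∑ t ∈ F, (wordBinom v t : ℤ)) = ((v.length.choose (k + 1) : ℕ) : ℤ) := by
      exact_mod_cast hsumV
    rw [hU', hV', hlen]
    ring
  -- membership of x
  have hxF : x ∈ F := by
    have hpos : 0 < wordBinom u x ∨ 0 < wordBinom v x := by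
      rcases Nat.eq_zero_or_pos (wordBinom u x) with h' | h'
      · right
        rcases Nat.eq_zero_or_pos (wordBinom v x) with h'' | h''
        · exact absurd (h'.trans h''.symm) hxne
        · exact h''
      · exact Or.inl h'
    rcases hpos with h' | h'
    · refine Finset.mem_union_left _ (Multiset.mem_toFinset.mpr ?_)
      exact Multiset.mem_filter.mpr ⟨Multiset.mem_coe.mpr (List.mem_sublists.mpr
        ((wordBinom_pos_iff u x).mp h')), hxlen⟩
    · refine Finset.mem_union_right _ (Multiset.mem_toFinset.mpr ?_)
      exact Multiset.mem_filter.mpr ⟨Multiset.mem_coe.mpr (List.mem_sublists.mpr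
        ((wordBinom_pos_iff v x).mp h')), hxlen⟩
  -- positivity of products
  have hcpos : ∀ t ∈ F, 0 < (t.map c).prod := by
    intro t ht
    refine List.prod_pos ?_
    intro ci hci
    rcases List.mem_map.mp hci with ⟨a, ha, rfl⟩
    have hau : 0 < wordBinom u [a] := by
      rcases hFsub t ht with h' | h'
      · exact (wordBinom_pos_iff u [a]).mpr (List.singleton_sublist.mpr (h'.subset ha))
      · have : 0 < wordBinom v [a] :=
          (wordBinom_pos_iff v [a]).mpr (List.singleton_sublist.mpr (h'.subset ha))
        rwa [h1 [a] (by simpa using hk)]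
    simp only [hc]
    exact_mod_cast hau
  have hxprod : 0 < (x.map c).prod := hcpos x hxF
  have hδx : δ x ≠ 0 := by
    simp only [hδ]
    intro h'
    have hc' : (wordBinom u x : ℤ) = (wordBinom v x : ℤ) := by linarith
    exact hxne (Nat.cast_inj.mp hc')
  rcases lt_trichotomy (δ x) 0 with hneg | hzero | hpos
  · have hall : ∀ t ∈ F, δ t < 0 := by
      intro t ht
      have hch := hchain t (hFlen t ht)
      have hpt := hcpos t ht
      nlinarith
    have := Finset.sum_neg hall ⟨x, hxF⟩
    linarith
  · exact hδx hzero
  · have hall : ∀ t ∈ F, 0 < δ t := by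
      intro t ht
      have hch := hchain t (hFlen t ht)
      have hpt := hcpos t ht
      nlinarith
    have := Finset.sum_pos hall ⟨x, hxF⟩
    linarith
end endgame

end AuxBinom

theorem binomial_equivalence_propagation {A : Type*} [DecidableEq A] (k : ℕ) (hk : 1 ≤ k)
    (u v : List A) (hlen : u.length = v.length)
    (h1 : BinEquiv k u v) (h2 : ¬ BinEquiv (k + 1) u v) (w : List A) :
    (BinEquiv k (w ++ u ++ u) (w ++ v ++ v) ∧
      ¬ BinEquiv (k + 1) (w ++ u ++ u) (w ++ v ++ v)) ∧
    (BinEquiv (k + 1) (w ++ u ++ v) (w ++ v ++ u) ∧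
      ¬ BinEquiv (k + 2) (w ++ u ++ v) (w ++ v ++ u)) := by
  classical
  obtain ⟨x, hxlen, hxne⟩ : ∃ x : List A, x.length = k + 1 ∧ wordBinom u x ≠ wordBinom v x := by
    by_contra hcon
    push_neg at hcon
    apply h2
    intro t ht
    rcases Nat.lt_or_ge t.length (k + 1) with h' | h'
    · exact h1 t (by omega)
    · exact hcon t (by omega)
  refine ⟨⟨?_, ?_⟩, ?_, ?_⟩
  · intro y hy
    have hz := lemA_pos k u v w h1 y hy
    have h' : (wordBinom (w ++ u ++ u) y : ℤ) = wordBinom (w ++ v ++ v) y := by linarith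
    exact_mod_cast h'
  · intro H
    have hEq := H x (by omega)
    have hA := lemA_neg k u v w h1 x hxlen
    rw [hEq, sub_self] at hA
    have h' : (wordBinom u x : ℤ) = wordBinom v x := by linarith
    exact hxne (by exact_mod_cast h')
  · intro y hy
    have hz := lemB_pos k u v w h1 y hy
    have h' : (wordBinom (w ++ u ++ v) y : ℤ) = wordBinom (w ++ v ++ u) y := by linarith
    exact_mod_cast h'
  · intro H
    exact no_k2_equiv k hk u v w hlen h1 x hxlen hxne H
end

section
/- Let h = 0112122122212222⋯ be the fixed point beginning with 0 of the morphism μ on {0,1,2}* given by μ(0) = 01, μ(1) = 12, μ(2) = 2. Then the abelian complexity b^(1)_h is unbounded (sup_n b^(1)_h(n) = ∞), and for all n ≥ 6 one has b^(1)_h(n) < b^(2)_h(n) < p_h(n). -/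
/-- Application of a morphism (given by the images of letters) to a finite word. -/
def mAp {A B : Type*} (f : A → List B) (u : List A) : List B := (u.map f).flatten

/-- A morphism is Parikh-collinear if the Parikh vectors of images of letters are
pairwise rationally collinear. -/
def ParikhCollinear {A B : Type*} [DecidableEq B] (f : A → List B) : Prop :=
  ∀ a b : A, ∃ r : ℚ, ∀ c : B, ((f b).count c : ℚ) = r * ((f a).count c)

/-- Length-`n` prefix of an infinite word. -/
def pre {A : Type*} (x : ℕ → A) (n : ℕ) : List A := (List.range n).map x

/-- `z` is the image of the infinite word `x` under the morphism `f`, and this image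
is an infinite word: images of prefixes of `x` are prefixes of `z`, of unbounded length. -/
def InfMapsTo {A B : Type*} (f : A → List B) (x : ℕ → A) (z : ℕ → B) : Prop :=
  (∀ n, mAp f (pre x n) = pre z (mAp f (pre x n)).length) ∧
  (∀ m, ∃ n, m ≤ (mAp f (pre x n)).length)

/-- The morphism `μ : 0 ↦ 01, 1 ↦ 12, 2 ↦ 2`. -/
def mu : Fin 3 → List (Fin 3) :=
  fun a => if a = 0 then [0, 1] else if a = 1 then [1, 2] else [2]


/-! ### Auxiliary lemmas about `wordBinom` -/

lemma beq_inst_eq {A : Type*} [DecidableEq A] :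
    (instBEqOfDecidableEq : BEq (List A)) = List.instBEq :=
  lawful_beq_subsingleton _ _

lemma binom_eq {A : Type*} [DecidableEq A] (u w : List A) :
    wordBinom u w = u.sublists'.count w := by
  unfold wordBinom
  exact beq_inst_eq (A := A) ▸ (List.sublists_perm_sublists' u).count_eq w

lemma binom_nil {A : Type*} [DecidableEq A] (u : List A) : wordBinom u [] = 1 := by
  induction u with
  | nil => rfl
  | cons a u ih =>
    rw [binom_eq] at ih ⊢
    rw [List.sublists'_cons, List.count_append, ih]
    have : List.count ([] : List A) (u.sublists'.map (List.cons a)) = 0 := by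
      rw [List.count_eq_zero]; simp
    omega

lemma binom_nil_cons {A : Type*} [DecidableEq A] (b : A) (t : List A) :
    wordBinom ([] : List A) (b :: t) = 0 := by
  rw [binom_eq, List.count_eq_zero]; simp [List.sublists']

lemma binom_cons {A : Type*} [DecidableEq A] (a : A) (u : List A) (b : A) (t : List A) :
    wordBinom (a :: u) (b :: t) =
      wordBinom u (b :: t) + if b = a then wordBinom u t else 0 := by
  rw [binom_eq, binom_eq, List.sublists'_cons, List.count_append]
  congr 1
  rcases eq_or_ne b a with rfl | hba
  · rw [if_pos rfl, binom_eq]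
    exact beq_inst_eq (A := A) ▸ List.count_map_of_injective u.sublists' (List.cons b)
      (fun x y hxy => by simpa using hxy) t
  · rw [if_neg hba, List.count_eq_zero]
    intro hm
    obtain ⟨y, _, hy⟩ := List.mem_map.1 hm
    exact hba ((List.cons.injEq _ _ _ _ ▸ hy).1).symm

lemma binom_single {A : Type*} [DecidableEq A] (u : List A) (a : A) :
    wordBinom u [a] = u.count a := by
  induction u with
  | nil => rfl
  | cons c u ih =>
    rw [binom_cons, ih, binom_nil, List.count_cons]
    rcases eq_or_ne a c with rfl | hac
    · simp
    · simp [hac, Ne.symm hac]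

lemma binom_rep {A : Type*} [DecidableEq A] (m : ℕ) (c : A) (x : List A) :
    wordBinom (List.replicate m c) x =
      if x = List.replicate x.length c then m.choose x.length else 0 := by
  induction m generalizing x with
  | zero =>
    cases x with
    | nil => simpa using binom_nil ([] : List A)
    | cons b t =>
      rw [show List.replicate 0 c = ([] : List A) from rfl, binom_nil_cons]
      split
      · rw [Nat.choose_eq_zero_of_lt (by simp)]
      · rfl
  | succ m ih =>
    rw [List.replicate_succ]
    cases x with
    | nil => simp [binom_nil]
    | cons b t =>
      rw [binom_cons, ih, ih]
      by_cases hb : b = c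
      · subst hb
        by_cases ht : t = List.replicate t.length b
        · have h1 : (b :: t : List A) = List.replicate (b :: t).length b := by
            rw [List.length_cons, List.replicate_succ]; exact congrArg _ ht
          rw [if_pos ht, if_pos h1, if_pos h1, if_pos rfl, List.length_cons,
            Nat.choose_succ_succ]
          simp only [Nat.succ_eq_add_one]; omega
        · have h1 : (b :: t : List A) ≠ List.replicate (b :: t).length b := by
            intro hx; rw [List.length_cons, List.replicate_succ] at hx
            injection hx with _ h2; exact ht h2
          rw [if_neg ht, if_neg h1, if_neg h1, if_pos rfl]
      · have h1 : (b :: t : List A) ≠ List.replicate (b :: t).length c := by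
          intro hx; rw [List.length_cons, List.replicate_succ] at hx
          injection hx with h2 _; exact hb h2
        rw [if_neg h1, if_neg h1, if_neg hb]

lemma binom_append_single {A : Type*} [DecidableEq A] (u v : List A) (a : A) :
    wordBinom (u ++ v) [a] = wordBinom u [a] + wordBinom v [a] := by
  simp [binom_single, List.count_append]

lemma binom_append_pair {A : Type*} [DecidableEq A] (u v : List A) (a b : A) :
    wordBinom (u ++ v) [a, b] =
      wordBinom u [a, b] + wordBinom v [a, b] + u.count a * v.count b := by
  induction u with
  | nil => simp [binom_nil_cons]
  | cons c u ih =>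
    rw [List.cons_append, binom_cons, binom_cons, ih, binom_single, binom_single]
    by_cases hac : a = c
    · simp [hac, List.count_append, List.count_cons]; ring
    · simp [hac, List.count_cons, Ne.symm hac]

lemma binom_singleton_pair {A : Type*} [DecidableEq A] (c a b : A) :
    wordBinom [c] [a, b] = 0 := by
  rw [binom_cons, binom_nil_cons]
  split <;> simp [binom_nil_cons]

lemma binom_pair_pair {A : Type*} [DecidableEq A] (c d a b : A) :
    wordBinom [c, d] [a, b] =
      if a = c then (if b = d then 1 else 0) else 0 := by
  rw [binom_cons, binom_singleton_pair, binom_single]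
  rcases eq_or_ne a c with rfl | hac
  · simp [List.count_cons, List.count_nil]
    rcases eq_or_ne b d with rfl | hbd
    · simp
    · simp [hbd, Ne.symm hbd]
  · simp [hac]

lemma binEquiv_one_of {A : Type*} [DecidableEq A] {u v : List A}
    (hc : ∀ a, u.count a = v.count a) : BinEquiv 1 u v := by
  intro x hx
  match x with
  | [] => rw [binom_nil, binom_nil]
  | [a] => rw [binom_single, binom_single, hc]
  | a :: b :: t => simp at hx

lemma binEquiv_two_of {A : Type*} [DecidableEq A] {u v : List A}
    (hc : ∀ a, u.count a = v.count a)
    (hp : ∀ a b, wordBinom u [a, b] = wordBinom v [a, b]) : BinEquiv 2 u v := by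
  intro x hx
  match x with
  | [] => rw [binom_nil, binom_nil]
  | [a] => rw [binom_single, binom_single, hc]
  | [a, b] => exact hp a b
  | a :: b :: c :: t => simp at hx

/-! ### Triangular numbers and the prefix structure of the fixed point -/

def T : ℕ → ℕ
  | 0 => 0
  | k + 1 => T k + k + 1

lemma T_succ (k : ℕ) : T (k + 1) = T k + k + 1 := rfl

lemma T_mono : StrictMono T :=
  strictMono_nat_of_lt_succ (fun k => by show T k < T k + k + 1; omega)

lemma T_ge (k : ℕ) : k ≤ T k := by
  induction k with
  | zero => simp [T]
  | succ k ih => show k + 1 ≤ T k + k + 1; omega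

lemma noT {a x : ℕ} (h1 : T a < x) (h2 : x < T (a+1)) (j : ℕ) : T j ≠ x := by
  intro hx
  rcases le_or_gt j a with hj | hj
  · have := T_mono.le_iff_le.2 hj; omega
  · have := T_mono.le_iff_le.2 (Nat.succ_le_of_lt hj); simp [Nat.succ_le] at this; omega

def P : ℕ → List (Fin 3)
  | 0 => [0]
  | k + 1 => P k ++ 1 :: List.replicate k 2

lemma P_len (k : ℕ) : (P k).length = T k + 1 := by
  induction k with
  | zero => rfl
  | succ k ih =>
    show (P k ++ 1 :: List.replicate k 2).length = T (k + 1) + 1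
    simp [ih, T_succ]
    all_goals omega

lemma mAp_append {A B : Type*} (f : A → List B) (u v : List A) :
    mAp f (u ++ v) = mAp f u ++ mAp f v := by
  simp [mAp]

lemma mu_P (k : ℕ) : mAp mu (P k) = P (k + 1) := by
  induction k with
  | zero => decide
  | succ k ih =>
    show mAp mu (P k ++ 1 :: List.replicate k 2) = P (k+1) ++ 1 :: List.replicate (k+1) 2
    rw [mAp_append, ih]
    congr 1
    show mAp mu (1 :: List.replicate k 2) = _
    have hrep : ∀ m, mAp mu (List.replicate m 2) = List.replicate m 2 := by
      intro m
      induction m with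
      | zero => rfl
      | succ m ih2 =>
        rw [List.replicate_succ]
        show mAp mu (2 :: List.replicate m 2) = _
        simp [mAp] at ih2 ⊢
        rw [ih2]
        simp [mu, List.replicate_succ]
    simp [mAp] at hrep ⊢
    rw [hrep]
    simp [mu, List.replicate_succ]

lemma P_two {i : ℕ} (h1 : 1 ≤ i) (h2 : ∀ j, i ≠ 1 + T j) :
    ∀ k (hik : i < (P k).length), (P k)[i] = 2 := by
  intro k
  induction k with
  | zero => intro hik; simp [P] at hik; omega
  | succ k ih =>
    intro hik
    rcases lt_or_ge i (P k).length with hik' | hik'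
    · rw [List.getElem_of_eq (show P (k+1) = P k ++ 1 :: List.replicate k 2 from rfl) hik,
        List.getElem_append_left hik']
      exact ih hik'
    · rw [List.getElem_of_eq (show P (k+1) = P k ++ 1 :: List.replicate k 2 from rfl) hik,
        List.getElem_append_right hik']
      have hlen : i - (P k).length ≠ 0 := by
        intro hz
        have : i = (P k).length := by omega
        rw [P_len] at this
        exact h2 k (by omega)
      obtain ⟨t, ht⟩ := Nat.exists_eq_succ_of_ne_zero hlen
      simp only [ht]
      rw [List.getElem_cons_succ, List.getElem_replicate]

section FixedPoint

variable (h : ℕ → Fin 3) (h0 : h 0 = 0) (hfix : InfMapsTo mu h h)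

include h0 hfix

lemma pre_h_P (k : ℕ) : pre h (P k).length = P k := by
  induction k with
  | zero =>
    show pre h 1 = [0]
    simp [pre, List.range_succ, h0]
  | succ k ih =>
    have := hfix.1 (P k).length
    rw [ih, mu_P] at this
    exact this.symm

lemma h_val {i : ℕ} {k : ℕ} (hik : i < (P k).length) : h i = (P k)[i] := by
  have hp := congrArg (fun l => l.getD i 2) (pre_h_P h h0 hfix k)
  rw [List.getD_eq_getElem _ _ (by simp [pre]; exact hik),
    List.getD_eq_getElem _ _ hik] at hp
  simpa [pre] using hp

lemma h_one (j : ℕ) : h (1 + T j) = 1 := by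
  have hlen : 1 + T j < (P (j+1)).length := by
    rw [P_len]; have := T_mono (lt_add_one j); omega
  rw [h_val h h0 hfix hlen]
  rw [List.getElem_of_eq (show P (j+1) = P j ++ 1 :: List.replicate j 2 from rfl) hlen]
  rw [List.getElem_append_right (by rw [P_len]; omega)]
  simp only [P_len, show 1 + T j - (T j + 1) = 0 from by omega]
  rfl

lemma h_two {i : ℕ} (h1 : 1 ≤ i) (h2 : ∀ j, i ≠ 1 + T j) : h i = 2 := by
  have hik : i < (P i).length := by rw [P_len]; have := T_ge i; omega
  rw [h_val h h0 hfix hik]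
  exact P_two h1 h2 i hik

end FixedPoint

/-! ### Windows and factors -/

def W {A : Type*} (x : ℕ → A) (i n : ℕ) : List A :=
  (List.range n).map (fun j => x (i + j))

lemma W_len {A : Type*} (x : ℕ → A) (i n : ℕ) : (W x i n).length = n := by
  simp [W]

lemma W_mem_Fac {A : Type*} (x : ℕ → A) (i n : ℕ) : W x i n ∈ Fac x n := by
  refine ⟨W_len x i n, i, ?_⟩
  show W x i n = (List.range (W x i n).length).map fun j => x (i + j)
  rw [W_len]
  rfl

lemma mem_Fac_of_vals {A : Type*} {x : ℕ → A} {u : List A} {n : ℕ} (p : ℕ)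
    (hlen : u.length = n)
    (hval : ∀ j (hj : j < n), u[j]'(by omega) = x (p + j)) : u ∈ Fac x n := by
  have : u = W x p n := by
    apply List.ext_getElem (by simp [W, hlen])
    intro j h1 h2
    simp only [W, List.getElem_map, List.getElem_range]
    exact hval j (by omega)
  rw [this]
  exact W_mem_Fac x p n

lemma Fac_finite {A : Type*} [Finite A] (x : ℕ → A) (n : ℕ) : (Fac x n).Finite :=
  Set.Finite.subset (List.finite_length_eq A n) (fun _ hu => hu.1)

lemma W_cons {A : Type*} (x : ℕ → A) (i n : ℕ) :
    W x i (n + 1) = x i :: W x (i + 1) n := by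
  rw [W, List.range_succ_eq_map, List.map_cons, List.map_map]
  refine congrArg₂ _ (by simp) ?_
  refine List.map_congr_left (fun j _ => ?_)
  show x (i + (j + 1)) = x (i + 1 + j)
  congr 1
  omega

lemma W_concat {A : Type*} (x : ℕ → A) (i n : ℕ) :
    W x i (n + 1) = W x i n ++ [x (i + n)] := by
  rw [W, List.range_succ]
  simp [W]

lemma ivt_aux (c : ℕ → ℕ) (hstep : ∀ i, c (i+1) ≤ c i + 1 ∧ c i ≤ c (i+1) + 1) :
    ∀ (d p j : ℕ), c (p + d) ≤ j → j ≤ c p → ∃ i, c i = j := by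
  intro d
  induction d with
  | zero =>
    intro p j h1 h2
    rw [Nat.add_zero] at h1
    exact ⟨p, by omega⟩
  | succ d ih =>
    intro p j h1 h2
    rcases eq_or_lt_of_le h2 with heq | hlt
    · exact ⟨p, heq.symm⟩
    · have := (hstep p).2
      apply ih (p + 1) j
      · rw [show p + 1 + d = p + (d + 1) from by omega]; exact h1
      · omega

lemma countP_range_mono (p : ℕ → Bool) {a b : ℕ} (hab : a ≤ b) :
    (List.range a).countP p ≤ (List.range b).countP p := by
  obtain ⟨r, rfl⟩ := Nat.exists_eq_add_of_le hab
  rw [List.range_add, List.countP_append]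
  omega

lemma countP_range_ge (p : ℕ → Bool) (g : ℕ → ℕ) (hg : StrictMono g) :
    ∀ (m n : ℕ), (∀ i < m, g i < n ∧ p (g i)) → m ≤ (List.range n).countP p := by
  intro m
  induction m with
  | zero => intro n _; omega
  | succ m ih =>
    intro n hin
    have h1 : m ≤ (List.range (g m)).countP p := by
      apply ih
      intro i hi
      exact ⟨hg (by omega), (hin i (by omega)).2⟩
    have h2 : (List.range (g m + 1)).countP p = (List.range (g m)).countP p + 1 := by
      rw [List.range_succ, List.countP_append]
      simp [(hin m (by omega)).2]
    have h3 := countP_range_mono p (show g m + 1 ≤ n from (hin m (by omega)).1)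
    omega

lemma ncard_image_lt {α β : Type*} {S : Set α} (f : α → β) (hfin : S.Finite)
    {u v : α} (hu : u ∈ S) (hv : v ∈ S) (huv : u ≠ v) (hf : f u = f v) :
    (f '' S).ncard < S.ncard := by
  have himg : f '' S = f '' (S \ {u}) := by
    apply Set.Subset.antisymm
    · rintro y ⟨w, hw, rfl⟩
      rcases eq_or_ne w u with rfl | hwu
      · exact ⟨v, ⟨hv, fun hmem => huv (Set.mem_singleton_iff.1 hmem).symm⟩, hf.symm⟩
      · exact ⟨w, ⟨hw, fun hmem => hwu (Set.mem_singleton_iff.1 hmem)⟩, rfl⟩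
    · exact Set.image_mono Set.diff_subset
  rw [himg]
  calc (f '' (S \ {u})).ncard ≤ (S \ {u}).ncard :=
        Set.ncard_image_le (hfin.subset Set.diff_subset)
    _ < S.ncard := Set.ncard_diff_singleton_lt_of_mem hu hfin

lemma choose2_succ (m : ℕ) : (m + 1).choose 2 = m.choose 2 + m := by
  have H := Nat.choose_succ_succ m 1
  simp only [Nat.choose_one_right, Nat.succ_eq_add_one, Nat.reduceAdd] at H
  omega

section FixedPoint2

variable (h : ℕ → Fin 3) (h0 : h 0 = 0) (hfix : InfMapsTo mu h h)

include h0 hfix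

lemma h_two_between {i a b : ℕ} (hb : T b = T a + a + 1)
    (h1 : T a + 1 < i) (h2 : i < T b + 1) : h i = 2 := by
  have hs := T_succ a
  apply h_two h h0 hfix (by omega)
  intro j hj
  exact absurd (show T j = i - 1 from by omega)
    (noT (a := a) (show T a < i - 1 from by omega) (show i - 1 < T (a+1) from by omega) j)

lemma mem_u1 {n : ℕ} (hn : 2 ≤ n) :
    (1 :: List.replicate (n-1) 2 : List (Fin 3)) ∈ Fac h n := by
  have hT : T (n-1) = T (n-2) + (n-2) + 1 := by
    rw [show n-1 = n-2+1 from by omega]; exact T_succ (n-2)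
  have hTn : T n = T (n-1) + (n-1) + 1 := by
    rw [show n = n-1+1 from by omega]; exact T_succ (n-1)
  refine mem_Fac_of_vals (1 + T (n-1)) (by simp; omega) ?_
  intro j hj
  match j with
  | 0 =>
    rw [List.getElem_cons_zero, Nat.add_zero]
    exact (h_one h h0 hfix (n-1)).symm
  | (t+1) =>
    rw [List.getElem_cons_succ, List.getElem_replicate]
    exact (h_two_between h h0 hfix (a := n-1) (b := n) hTn
      (by omega) (by omega)).symm

lemma mem_v1 {n : ℕ} (hn : 3 ≤ n) :
    (2 :: 1 :: List.replicate (n-2) 2 : List (Fin 3)) ∈ Fac h n := by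
  have hT : T (n-1) = T (n-2) + (n-2) + 1 := by
    rw [show n-1 = n-2+1 from by omega]; exact T_succ (n-2)
  have hTn : T n = T (n-1) + (n-1) + 1 := by
    rw [show n = n-1+1 from by omega]; exact T_succ (n-1)
  refine mem_Fac_of_vals (T (n-1)) (by simp; omega) ?_
  intro j hj
  match j with
  | 0 =>
    rw [List.getElem_cons_zero, Nat.add_zero]
    exact (h_two_between h h0 hfix (a := n-2) (b := n-1) hT
      (by omega) (by omega)).symm
  | 1 =>
    rw [List.getElem_cons_succ, List.getElem_cons_zero]
    rw [show T (n-1) + 1 = 1 + T (n-1) from by omega]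
    exact (h_one h h0 hfix (n-1)).symm
  | (t+2) =>
    rw [List.getElem_cons_succ, List.getElem_cons_succ, List.getElem_replicate]
    exact (h_two_between h h0 hfix (a := n-1) (b := n) hTn
      (by omega) (by omega)).symm

lemma mem_u2 {n : ℕ} (hn : 3 ≤ n) :
    (1 :: (List.replicate (n-2) 2 ++ [1]) : List (Fin 3)) ∈ Fac h n := by
  have hT : T (n-1) = T (n-2) + (n-2) + 1 := by
    rw [show n-1 = n-2+1 from by omega]; exact T_succ (n-2)
  refine mem_Fac_of_vals (1 + T (n-2)) (by simp; omega) ?_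
  intro j hj
  match j with
  | 0 =>
    rw [List.getElem_cons_zero, Nat.add_zero]
    exact (h_one h h0 hfix (n-2)).symm
  | (t+1) =>
    rw [List.getElem_cons_succ]
    rcases lt_or_ge t (n-2) with ht | ht
    · rw [List.getElem_append_left (by simpa using ht), List.getElem_replicate]
      exact (h_two_between h h0 hfix (a := n-2) (b := n-1) hT
        (by omega) (by omega)).symm
    · have ht2 : t = n - 2 := by omega
      subst ht2
      rw [List.getElem_append_right (by simp)]
      simp only [List.length_replicate, Nat.sub_self, List.getElem_cons_zero]
      rw [show 1 + T (n-2) + (n-2+1) = 1 + T (n-1) from by omega]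
      exact (h_one h h0 hfix (n-1)).symm

lemma mem_v2 {n : ℕ} (hn : 6 ≤ n) :
    (2 :: 1 :: (List.replicate (n-4) 2 ++ [1, 2]) : List (Fin 3)) ∈ Fac h n := by
  have hT1 : T (n-4) = T (n-5) + (n-5) + 1 := by
    rw [show n-4 = n-5+1 from by omega]; exact T_succ (n-5)
  have hT2 : T (n-3) = T (n-4) + (n-4) + 1 := by
    rw [show n-3 = n-4+1 from by omega]; exact T_succ (n-4)
  have hT3 : T (n-2) = T (n-3) + (n-3) + 1 := by
    rw [show n-2 = n-3+1 from by omega]; exact T_succ (n-3)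
  refine mem_Fac_of_vals (T (n-4)) (by simp; omega) ?_
  intro j hj
  match j with
  | 0 =>
    rw [List.getElem_cons_zero, Nat.add_zero]
    exact (h_two_between h h0 hfix (a := n-5) (b := n-4) hT1
      (by omega) (by omega)).symm
  | 1 =>
    rw [List.getElem_cons_succ, List.getElem_cons_zero]
    rw [show T (n-4) + 1 = 1 + T (n-4) from by omega]
    exact (h_one h h0 hfix (n-4)).symm
  | (t+2) =>
    rw [List.getElem_cons_succ, List.getElem_cons_succ]
    rcases lt_or_ge t (n-4) with ht | ht
    · rw [List.getElem_append_left (by simpa using ht), List.getElem_replicate]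
      exact (h_two_between h h0 hfix (a := n-4) (b := n-3) hT2
        (by omega) (by omega)).symm
    · rw [List.getElem_append_right (by simpa using ht)]
      have hj2 : t < n - 2 := by omega
      rcases eq_or_lt_of_le ht with ht2 | ht2
      · simp only [List.length_replicate, ← ht2, Nat.sub_self, List.getElem_cons_zero]
        rw [show T (n-4) + (n-4+2) = 1 + T (n-3) from by omega]
        exact (h_one h h0 hfix (n-3)).symm
      · have ht3 : t = n - 3 := by omega
        subst ht3
        simp only [List.length_replicate, show n-3-(n-4) = 1 from by omega,
          List.getElem_cons_succ, List.getElem_cons_zero]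
        exact (h_two_between h h0 hfix (a := n-3) (b := n-2) hT3
          (by omega) (by omega)).symm

omit h0 hfix in
lemma c_step {n : ℕ} (hn : 1 ≤ n) (i : ℕ) :
    (W h (i+1) n).count 1 ≤ (W h i n).count 1 + 1 ∧
    (W h i n).count 1 ≤ (W h (i+1) n).count 1 + 1 := by
  obtain ⟨m, rfl⟩ : ∃ m, n = m + 1 := ⟨n-1, by omega⟩
  rw [W_concat h (i+1) m, W_cons h i m, List.count_cons, List.count_append]
  have hsing : ∀ a : Fin 3, List.count 1 [a] ≤ 1 := by
    intro a; rw [List.count_singleton']; split <;> omega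
  constructor
  · have := hsing (h (i+1+m)); split_ifs <;> omega
  · have := hsing (h (i+1+m)); split_ifs <;> omega

lemma c_upper (C : ℕ) : C + 1 ≤ (W h 1 (T C + 1)).count 1 := by
  have e : (W h 1 (T C + 1)).count 1
      = (List.range (T C + 1)).countP (fun j => h (1 + j) == 1) := by
    rw [W]
    exact List.countP_map
  rw [e]
  apply countP_range_ge _ T T_mono
  intro i hi
  refine ⟨by have := T_mono.le_iff_le.2 (show i ≤ C from by omega); omega, ?_⟩
  rw [h_one h h0 hfix i]
  decide

lemma c_zero (n : ℕ) : (W h (2 + T n) n).count 1 = 0 := by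
  rw [List.count_eq_zero]
  intro hmem
  rw [W, List.mem_map] at hmem
  obtain ⟨j, hj, hval⟩ := hmem
  rw [List.mem_range] at hj
  have hs := T_succ n
  rw [h_two_between h h0 hfix (a := n) (b := n+1) (by omega)
    (by omega) (by omega)] at hval
  exact absurd hval (by decide)

end FixedPoint2

/-! ### The distinguishing / coinciding pairs of factors -/

lemma equiv_one_pair {n : ℕ} (hn : 6 ≤ n) :
    BinEquiv 1 (1 :: List.replicate (n-1) 2 : List (Fin 3))
      (2 :: 1 :: List.replicate (n-2) 2) := by
  apply binEquiv_one_of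
  intro a
  rw [show n - 1 = (n-2) + 1 from by omega, List.replicate_succ]
  simp only [List.count_cons]
  omega

lemma not_equiv_two_pair {n : ℕ} (hn : 6 ≤ n) :
    ¬ BinEquiv 2 (1 :: List.replicate (n-1) 2 : List (Fin 3))
      (2 :: 1 :: List.replicate (n-2) 2) := by
  intro hE
  have hx := hE [1, 2] (by simp)
  have erepP : ∀ m : ℕ, wordBinom (List.replicate m (2 : Fin 3)) [1, 2] = 0 := by
    intro m; rw [binom_rep, if_neg (by decide)]
  have erep2 : ∀ m : ℕ, wordBinom (List.replicate m (2 : Fin 3)) [2] = m := by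
    intro m; rw [binom_rep, if_pos (by decide)]
    simpa using Nat.choose_one_right m
  rw [binom_cons, binom_cons, binom_cons, erepP, erepP, erep2, erep2] at hx
  simp at hx
  omega

lemma equiv_two_pair {n : ℕ} (hn : 6 ≤ n) :
    BinEquiv 2 (1 :: (List.replicate (n-2) 2 ++ [1]) : List (Fin 3))
      (2 :: 1 :: (List.replicate (n-4) 2 ++ [1, 2])) := by
  have hc1 : (n-2).choose 2 = (n-3).choose 2 + (n-3) := by
    have := choose2_succ (n-3); rw [show n-3+1 = n-2 from by omega] at this; omega
  have hc2 : (n-3).choose 2 = (n-4).choose 2 + (n-4) := by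
    have := choose2_succ (n-4); rw [show n-4+1 = n-3 from by omega] at this; omega
  apply binEquiv_two_of
  · intro a
    fin_cases a <;>
      simp [List.count_cons, List.count_append, List.count_replicate] <;> omega
  · intro a b
    show wordBinom ([1] ++ (List.replicate (n-2) 2 ++ [1])) [a, b]
        = wordBinom ([2, 1] ++ (List.replicate (n-4) 2 ++ [1, 2])) [a, b]
    rw [binom_append_pair, binom_append_pair, binom_append_pair, binom_append_pair]
    fin_cases a <;> fin_cases b <;>
      simp [binom_singleton_pair, binom_pair_pair, binom_rep, binom_single,
        List.count_replicate, List.count_cons] <;>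
      omega

theorem mu_fixed_point_complexities (h : ℕ → Fin 3) (h0 : h 0 = 0)
    (hfix : InfMapsTo mu h h) :
    (∀ C : ℕ, ∃ n : ℕ, C < bc h 1 n) ∧
    (∀ n : ℕ, 6 ≤ n → bc h 1 n < bc h 2 n ∧ bc h 2 n < fc h n) := by
  constructor
  · -- unbounded abelian complexity
    intro C
    refine ⟨T C + 1, ?_⟩
    set n := T C + 1 with hn
    have hstep := fun i => c_step h (n := n) (by omega) i
    have hup : C + 1 ≤ (W h 1 n).count 1 := c_upper h h0 hfix C
    have hz : (W h (2 + T n) n).count 1 = 0 := c_zero h h0 hfix n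
    have hex : ∀ j : Fin (C+1), ∃ i, (W h i n).count 1 = (j : ℕ) := by
      intro j
      apply ivt_aux (fun i => (W h i n).count 1) hstep ((2 + T n) - 1) 1
      · rw [show 1 + (2 + T n - 1) = 2 + T n from by omega, hz]; omega
      · have := j.isLt; omega
    choose F hF using hex
    have hGinj : Function.Injective
        (fun j : Fin (C+1) => Quotient.mk (binSetoid (Fin 3) 1) (W h (F j) n)) := by
      intro a b hab
      have hE : BinEquiv 1 (W h (F a) n) (W h (F b) n) := Quotient.exact hab
      have hx := hE [1] (by simp)
      rw [binom_single, binom_single, hF a, hF b] at hx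
      exact Fin.ext hx
    have hsub : Set.range
          (fun j : Fin (C+1) => Quotient.mk (binSetoid (Fin 3) 1) (W h (F j) n))
        ⊆ Quotient.mk (binSetoid (Fin 3) 1) '' Fac h n := by
      rintro y ⟨j, rfl⟩
      exact ⟨W h (F j) n, W_mem_Fac h (F j) n, rfl⟩
    have h1 : (Set.range
        (fun j : Fin (C+1) => Quotient.mk (binSetoid (Fin 3) 1) (W h (F j) n))).ncard
        = C + 1 := by
      rw [← Nat.card_coe_set_eq, Nat.card_range_of_injective hGinj,
        Nat.card_eq_fintype_card, Fintype.card_fin]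
    have h2 : (Set.range
        (fun j : Fin (C+1) => Quotient.mk (binSetoid (Fin 3) 1) (W h (F j) n))).ncard
        ≤ bc h 1 n :=
      Set.ncard_le_ncard hsub ((Fac_finite h n).image _)
    omega
  · -- the strict inequalities
    intro n hn
    have facfin := Fac_finite h n
    set u1 : List (Fin 3) := 1 :: List.replicate (n-1) 2 with hu1def
    set v1 : List (Fin 3) := 2 :: 1 :: List.replicate (n-2) 2 with hv1def
    set u2 : List (Fin 3) := 1 :: (List.replicate (n-2) 2 ++ [1]) with hu2def
    set v2 : List (Fin 3) := 2 :: 1 :: (List.replicate (n-4) 2 ++ [1, 2]) with hv2def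
    have hu1 : u1 ∈ Fac h n := mem_u1 h h0 hfix (by omega)
    have hv1 : v1 ∈ Fac h n := mem_v1 h h0 hfix (by omega)
    have hu2 : u2 ∈ Fac h n := mem_u2 h h0 hfix (by omega)
    have hv2 : v2 ∈ Fac h n := mem_v2 h h0 hfix hn
    constructor
    · -- bc 1 < bc 2
      let φ : Quotient (binSetoid (Fin 3) 2) → Quotient (binSetoid (Fin 3) 1) :=
        Quotient.map id (fun u v huv => fun x hx => huv x (le_trans hx one_le_two))
      have hcomp : (fun w => Quotient.mk (binSetoid (Fin 3) 1) w)
          = φ ∘ (fun w => Quotient.mk (binSetoid (Fin 3) 2) w) := by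
        funext w
        show _ = φ (Quotient.mk _ w)
        rw [show φ (Quotient.mk _ w) = Quotient.mk (binSetoid (Fin 3) 1) (id w) from
          Quotient.map_mk _ _ w]
        rfl
      show (Quotient.mk (binSetoid (Fin 3) 1) '' Fac h n).ncard
          < (Quotient.mk (binSetoid (Fin 3) 2) '' Fac h n).ncard
      rw [show (Quotient.mk (binSetoid (Fin 3) 1) '' Fac h n)
          = φ '' ((fun w => Quotient.mk (binSetoid (Fin 3) 2) w) '' Fac h n) from by
        rw [← Set.image_comp, ← hcomp]]
      apply ncard_image_lt φ (facfin.image _)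
        (Set.mem_image_of_mem _ hu1) (Set.mem_image_of_mem _ hv1)
      · intro he
        exact not_equiv_two_pair hn (Quotient.exact he)
      · rw [show φ (Quotient.mk _ u1) = Quotient.mk (binSetoid (Fin 3) 1) (id u1) from
          Quotient.map_mk _ _ u1,
          show φ (Quotient.mk _ v1) = Quotient.mk (binSetoid (Fin 3) 1) (id v1) from
          Quotient.map_mk _ _ v1]
        exact Quotient.sound (equiv_one_pair hn)
    · -- bc 2 < fc
      show (Quotient.mk (binSetoid (Fin 3) 2) '' Fac h n).ncard < (Fac h n).ncard
      apply ncard_image_lt _ facfin hu2 hv2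
      · intro he
        rw [hu2def, hv2def] at he
        injection he with h1 _
        exact absurd h1 (by decide)
      · exact Quotient.sound (equiv_two_pair hn)
end
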